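/- Define φ(τ) := τ + 36πi·g₃(τ)/(g₂(τ)² − 18η₁(τ)g₃(τ)). Then as Im τ → +∞ with Re τ bounded, φ(τ) = τ + (i/(168π))q^{−1} − 95i/(28π) + O(|q|), where q = e^{2πiτ}. -/

import Mathlib

open Complex Filter Asymptotics Set

noncomputable section

/-- q = e^{2πiτ} -/
def qq (τ : ℂ) : ℂ := Complex.exp (2 * (Real.pi : ℂ) * Complex.I * τ)

/-- divisor power sum σ_k(n) as a complex number -/
def sigmaC (k n : ℕ) : ℂ := ∑ d ∈ n.divisors, (d : ℂ) ^ k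

/-- normalized Eisenstein series E₂ -/
def E2 (τ : ℂ) : ℂ := 1 - 24 * ∑' n : ℕ, sigmaC 1 (n + 1) * qq τ ^ (n + 1)

/-- normalized Eisenstein series E₄ -/
def E4 (τ : ℂ) : ℂ := 1 + 240 * ∑' n : ℕ, sigmaC 3 (n + 1) * qq τ ^ (n + 1)

/-- normalized Eisenstein series E₆ -/
def E6 (τ : ℂ) : ℂ := 1 - 504 * ∑' n : ℕ, sigmaC 5 (n + 1) * qq τ ^ (n + 1)

/-- elliptic invariant g₂ -/
def g2 (τ : ℂ) : ℂ := (4 * (Real.pi : ℂ) ^ 4 / 3) * E4 τ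

/-- elliptic invariant g₃ -/
def g3 (τ : ℂ) : ℂ := (8 * (Real.pi : ℂ) ^ 6 / 27) * E6 τ

/-- quasi-period η₁ -/
def eta1 (τ : ℂ) : ℂ := ((Real.pi : ℂ) ^ 2 / 3) * E2 τ

/-- quasi-period η₂ (Legendre relation) -/
def eta2 (τ : ℂ) : ℂ := τ * eta1 τ - 2 * (Real.pi : ℂ) * Complex.I

/-- the function h = g₂² − 18η₁g₃ -/
def hh (τ : ℂ) : ℂ := g2 τ ^ 2 - 18 * eta1 τ * g3 τ

/-- the family f_C -/
def f (C τ : ℂ) : ℂ := (C - τ) * g2 τ ^ 2 - 18 * (C * eta1 τ - eta2 τ) * g3 τ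

end


section AuxPhi
open scoped Topology

local notation "π" => (Real.pi : ℂ)

/-- the real comparison series -/
noncomputable def Cc (k : ℕ) : ℝ := ∑' n : ℕ, ((n:ℝ) + 3) ^ (k+1) * (1/2) ^ n

lemma sigmaC_norm_le (k n : ℕ) : ‖sigmaC k n‖ ≤ (n:ℝ) ^ (k+1) := by
  unfold sigmaC
  calc ‖∑ d ∈ n.divisors, (d:ℂ)^k‖ ≤ ∑ d ∈ n.divisors, ‖(d:ℂ)^k‖ := norm_sum_le _ _
  _ ≤ ∑ _d ∈ n.divisors, (n:ℝ)^k := by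
      apply Finset.sum_le_sum; intro d hd
      rw [norm_pow, Complex.norm_natCast]
      exact pow_le_pow_left₀ (by positivity) (Nat.cast_le.mpr (Nat.divisor_le hd)) k
  _ ≤ (n:ℝ) * (n:ℝ)^k := by
      rw [Finset.sum_const, nsmul_eq_mul]
      gcongr
      exact_mod_cast Finset.card_le_card (fun d hd => Finset.mem_Icc.mpr
        ⟨Nat.one_le_iff_ne_zero.mpr (Nat.pos_of_mem_divisors hd).ne', Nat.divisor_le hd⟩)
        |>.trans_eq (by rw [Nat.card_Icc]; omega)
  _ = (n:ℝ)^(k+1) := by ring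

lemma sigmaC_two (k : ℕ) : sigmaC k 2 = 1 + 2 ^ k := by
  have : (2:ℕ).divisors = {1, 2} := by decide
  simp [sigmaC, this]

lemma summable_comp (k j : ℕ) : Summable (fun n : ℕ => ((n:ℝ) + j) ^ (k+1) * (1/2) ^ n) := by
  have h := summable_pow_mul_geometric_of_norm_lt_one (R := ℝ) (k+1) (r := 1/2) (by norm_num)
  have h2 : Summable (fun n : ℕ => ((n+j:ℕ):ℝ) ^ (k+1) * (1/2) ^ (n+j)) :=
    ((summable_nat_add_iff j).mpr h)
  have h3 := h2.mul_left ((2:ℝ) ^ j)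
  apply h3.congr
  intro n
  push_cast
  rw [div_pow, div_pow]
  field_simp
  ring

noncomputable def S (k : ℕ) (q : ℂ) : ℂ := ∑' n : ℕ, sigmaC k (n + 1) * q ^ (n + 1)

noncomputable def rho (k : ℕ) (q : ℂ) : ℂ := ∑' n : ℕ, sigmaC k (n + 3) * q ^ n

lemma term_summable (k : ℕ) {q : ℂ} (hq : ‖q‖ ≤ 1/2) (j : ℕ) :
    Summable (fun n : ℕ => sigmaC k (n + j) * q ^ n) := by
  apply Summable.of_norm_bounded (g := fun n : ℕ => ((n:ℝ) + j) ^ (k+1) * (1/2) ^ n)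
    (summable_comp k j)
  intro n
  rw [norm_mul, norm_pow]
  have h1 : ‖sigmaC k (n+j)‖ ≤ ((n:ℝ)+j)^(k+1) := by
    have := sigmaC_norm_le k (n+j); push_cast at this ⊢; linarith
  exact mul_le_mul h1 (pow_le_pow_left₀ (norm_nonneg q) hq n) (by positivity) (by positivity)

lemma rho_bound (k : ℕ) {q : ℂ} (hq : ‖q‖ ≤ 1/2) : ‖rho k q‖ ≤ Cc k := by
  apply tsum_of_norm_bounded ((summable_comp k 3).hasSum)
  intro n
  rw [norm_mul, norm_pow]
  have h1 : ‖sigmaC k (n+3)‖ ≤ ((n:ℝ)+3)^(k+1) := by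
    have := sigmaC_norm_le k (n+3); push_cast at this ⊢; linarith
  exact mul_le_mul h1 (pow_le_pow_left₀ (norm_nonneg q) hq n) (by positivity) (by positivity)

lemma S_split (k : ℕ) {q : ℂ} (hq : ‖q‖ ≤ 1/2) :
    S k q = q + sigmaC k 2 * q ^ 2 + q ^ 3 * rho k q := by
  have hsum : Summable (fun n : ℕ => sigmaC k (n + 1) * q ^ (n + 1)) := by
    have := (term_summable k hq 1).mul_right q
    apply this.congr; intro n; rw [pow_succ]; ring
  have := Summable.sum_add_tsum_nat_add (f := fun n : ℕ => sigmaC k (n + 1) * q ^ (n + 1)) 2 hsum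
  have hsig1 : sigmaC k 1 = 1 := by simp [sigmaC]
  rw [S, ← this]
  simp only [Finset.sum_range_succ, Finset.sum_range_zero]
  rw [hsig1]
  have htail : ∑' n : ℕ, sigmaC k (n + 2 + 1) * q ^ (n + 2 + 1)
      = q ^ 3 * rho k q := by
    rw [rho, ← tsum_mul_left]
    congr 1; funext n
    ring
  rw [htail]; ring

lemma ev_half : ∀ᶠ q : ℂ in 𝓝 0, ‖q‖ ≤ 1/2 := by
  have := Metric.closedBall_mem_nhds (0:ℂ) (by norm_num : (0:ℝ) < 1/2)
  filter_upwards [this] with q hq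
  simpa [mem_closedBall_zero_iff] using hq

lemma S_asym (k : ℕ) :
    (fun q : ℂ => S k q - (q + sigmaC k 2 * q ^ 2)) =O[𝓝 0] (fun q => q ^ 3) := by
  rw [isBigO_iff]
  refine ⟨Cc k, ?_⟩
  filter_upwards [ev_half] with q hq
  rw [S_split k hq]
  have := rho_bound k hq
  calc ‖q + sigmaC k 2 * q ^ 2 + q ^ 3 * rho k q - (q + sigmaC k 2 * q ^ 2)‖
      = ‖q ^ 3‖ * ‖rho k q‖ := by
        rw [show q + sigmaC k 2 * q ^ 2 + q ^ 3 * rho k q - (q + sigmaC k 2 * q ^ 2)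
          = q^3 * rho k q by ring, norm_mul]
  _ ≤ ‖q ^ 3‖ * Cc k := by gcongr
  _ = Cc k * ‖q^3‖ := by ring

lemma S_asym1 : (fun q : ℂ => S 1 q - (q + 3*q^2)) =O[𝓝 0] (fun q => q^3) :=
  (S_asym 1).congr_left fun q => by rw [sigmaC_two]; norm_num

lemma S_asym3 : (fun q : ℂ => S 3 q - (q + 9*q^2)) =O[𝓝 0] (fun q => q^3) :=
  (S_asym 3).congr_left fun q => by rw [sigmaC_two]; norm_num

lemma S_asym5 : (fun q : ℂ => S 5 q - (q + 33*q^2)) =O[𝓝 0] (fun q => q^3) :=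
  (S_asym 5).congr_left fun q => by rw [sigmaC_two]; norm_num

noncomputable def e2q (q : ℂ) : ℂ := 1 - 24 * S 1 q
noncomputable def e4q (q : ℂ) : ℂ := 1 + 240 * S 3 q
noncomputable def e6q (q : ℂ) : ℂ := 1 - 504 * S 5 q
noncomputable def Hq (q : ℂ) : ℂ :=
  ((4*π^4/3) * e4q q)^2 - 18*((π^2/3)*e2q q)*((8*π^6/27)*e6q q)
noncomputable def G3q (q : ℂ) : ℂ := (8*π^6/27) * e6q q

lemma pi_ne : π ≠ 0 := by exact_mod_cast Real.pi_ne_zero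

lemma div_aux (c d x : ℝ) (hd : d ≠ 0) (hx : x ≠ 0) : (c*x^3)/(d*x^2) = c/d*x := by
  field_simp

lemma q3_bigO_q2 : (fun q : ℂ => q^3) =O[𝓝 0] (fun q => q^2) := by
  have h1 : Tendsto (fun q : ℂ => q) (𝓝 0) (𝓝 0) := tendsto_id
  have := (isBigO_refl (fun q : ℂ => q^2) (𝓝 0)).mul (h1.isBigO_one ℂ)
  exact (this.congr_left fun q => by ring).congr_right fun q => by ring

-- tendsto of S k
lemma S_tendsto (k : ℕ) (hk : (fun q : ℂ => S k q - (q + (1+2^k : ℂ)*q^2)) =O[𝓝 0] (fun q => q^3)) : True := trivial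

lemma tendsto_of_asym {c : ℂ} {f : ℂ → ℂ} (h : (fun q : ℂ => f q - (q + c*q^2)) =O[𝓝 0] (fun q => q^3)) :
    Tendsto f (𝓝 0) (𝓝 0) := by
  have h3 : Tendsto (fun q : ℂ => q^3) (𝓝 0) (𝓝 0) := by
    simpa using (continuous_pow 3).tendsto (0:ℂ)
  have h1 := h.trans_tendsto h3
  have h2 : Tendsto (fun q : ℂ => q + c*q^2) (𝓝 0) (𝓝 0) := by
    have : Continuous (fun q : ℂ => q + c*q^2) := by continuity
    simpa using this.tendsto 0
  simpa using h1.add h2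

lemma e4q_tendsto : Tendsto e4q (𝓝 0) (𝓝 1) := by
  have := (tendsto_of_asym (c := 9) S_asym3).const_mul (240:ℂ)
  have h := (tendsto_const_nhds (x := (1:ℂ)) (f := 𝓝 (0:ℂ))).add this
  simpa [show e4q = fun x => 1 + 240 * S 3 x from rfl] using h

lemma e2q_tendsto : Tendsto e2q (𝓝 0) (𝓝 1) := by
  have := (tendsto_of_asym (c := 3) S_asym1).const_mul (24:ℂ)
  have h := (tendsto_const_nhds (x := (1:ℂ)) (f := 𝓝 (0:ℂ))).sub this
  simpa [show e2q = fun x => 1 - 24 * S 1 x from rfl] using h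

lemma e6q_tendsto : Tendsto e6q (𝓝 0) (𝓝 1) := by
  have := (tendsto_of_asym (c := 33) S_asym5).const_mul (504:ℂ)
  have h := (tendsto_const_nhds (x := (1:ℂ)) (f := 𝓝 (0:ℂ))).sub this
  simpa [show e6q = fun x => 1 - 504 * S 5 x from rfl] using h

-- approximations of e-functions by polynomials
lemma e4_approx : (fun q : ℂ => e4q q - (1 + 240*q + 2160*q^2)) =O[𝓝 0] (fun q => q^3) := by
  have := S_asym3.const_mul_left (240:ℂ)
  exact this.congr_left fun q => by simp [e4q]; ring

lemma e2_approx : (fun q : ℂ => e2q q - (1 - 24*q - 72*q^2)) =O[𝓝 0] (fun q => q^3) := by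
  have := S_asym1.const_mul_left (-24:ℂ)
  exact this.congr_left fun q => by simp [e2q]; ring

lemma e6_approx : (fun q : ℂ => e6q q - (1 - 504*q - 16632*q^2)) =O[𝓝 0] (fun q => q^3) := by
  have := S_asym5.const_mul_left (-504:ℂ)
  exact this.congr_left fun q => by simp [e6q]; ring

lemma DH : (fun q : ℂ => Hq q - (1792*π^8*q + 118272*π^8*q^2)) =O[𝓝 0] (fun q => q^3) := by
  have hP4 : Tendsto (fun q : ℂ => 1 + 240*q + 2160*q^2) (𝓝 0) (𝓝 1) := by
    have : Continuous (fun q : ℂ => 1 + 240*q + 2160*q^2) := by continuity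
    simpa using this.tendsto 0
  have hP2 : Tendsto (fun q : ℂ => 1 - 24*q - 72*q^2) (𝓝 0) (𝓝 1) := by
    have : Continuous (fun q : ℂ => 1 - 24*q - 72*q^2) := by continuity
    simpa using this.tendsto 0
  have key : (fun q : ℂ => e4q q^2 - e2q q * e6q q - (1008*q + 66528*q^2)) =O[𝓝 0]
      (fun q => q^3) := by
    have t1 : (fun q : ℂ => (e4q q + (1 + 240*q + 2160*q^2)) * (e4q q - (1 + 240*q + 2160*q^2)))
        =O[𝓝 0] (fun q => q^3) := by
      have hb : (fun q : ℂ => e4q q + (1 + 240*q + 2160*q^2)) =O[𝓝 0] (fun _ => (1:ℂ)) :=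
        (e4q_tendsto.add hP4).isBigO_one ℂ
      have := hb.mul e4_approx
      exact this.congr_right fun q => by ring
    have t2 : (fun q : ℂ => -((e2q q - (1 - 24*q - 72*q^2)) * e6q q)
        - (1 - 24*q - 72*q^2) * (e6q q - (1 - 504*q - 16632*q^2)))
        =O[𝓝 0] (fun q => q^3) := by
      have hb6 : (fun q : ℂ => e6q q) =O[𝓝 0] (fun _ => (1:ℂ)) := e6q_tendsto.isBigO_one ℂ
      have hbP2 : (fun q : ℂ => 1 - 24*q - 72*q^2) =O[𝓝 0] (fun _ => (1:ℂ)) :=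
        hP2.isBigO_one ℂ
      have h1 := (e2_approx.mul hb6).neg_left
      have h2 := (hbP2.mul e6_approx).congr_right (fun q => by ring : ∀ q:ℂ, (1:ℂ)*q^3 = q^3*1)
      have := h1.sub h2
      exact (this.congr_right fun q => by ring)
    have t3 : (fun q : ℂ => q^3 * (601344 + 3468096*q)) =O[𝓝 0] (fun q => q^3) := by
      have hb : Tendsto (fun q : ℂ => (601344:ℂ) + 3468096*q) (𝓝 0) (𝓝 601344) := by
        have : Continuous (fun q : ℂ => (601344:ℂ) + 3468096*q) := by continuity
        simpa using this.tendsto 0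
      have := (isBigO_refl (fun q : ℂ => q^3) (𝓝 0)).mul (hb.isBigO_one ℂ)
      exact this.congr_right fun q => by ring
    have := (t1.add t2).add t3
    exact this.congr_left fun q => by ring
  have := key.const_mul_left ((16*π^8/9 : ℂ))
  refine this.congr_left fun q => ?_
  simp only [Hq]
  ring
lemma D6 : (fun q : ℂ => G3q q - (8*π^6/27) * (1 - 504*q)) =O[𝓝 0] (fun q => q^2) := by
  have h1 : (fun q : ℂ => S 5 q - q) =O[𝓝 0] (fun q => q^2) := by
    have ha := S_asym5.trans q3_bigO_q2
    have hb : (fun q : ℂ => (33:ℂ)*q^2) =O[𝓝 0] (fun q => q^2) :=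
      (isBigO_refl _ _).const_mul_left 33
    exact (ha.add hb).congr_left fun q => by ring
  have := h1.const_mul_left ((8*π^6/27 : ℂ) * (-504))
  exact this.congr_left fun q => by simp only [G3q, e6q]; ring

noncomputable def Nf (q : ℂ) : ℂ :=
  36*π*Complex.I*G3q q*q - (Complex.I/(168*π) - 95*Complex.I*q/(28*π)) * Hq q

lemma N_bigO : Nf =O[𝓝 0] (fun q => q^3) := by
  have hid : Nf = fun q => 36*π*Complex.I*q * (G3q q - (8*π^6/27) * (1 - 504*q))
      - (Complex.I/(168*π) - 95*Complex.I*q/(28*π)) * (Hq q - (1792*π^8*q + 118272*π^8*q^2))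
      + 401280*π^7*Complex.I*q^3 := by
    funext q
    have hπ := pi_ne
    simp only [Nf]
    field_simp
    ring
  rw [hid]
  have t1 : (fun q : ℂ => 36*π*Complex.I*q * (G3q q - (8*π^6/27) * (1 - 504*q)))
      =O[𝓝 0] (fun q => q^3) := by
    have hq1 : (fun q : ℂ => 36*π*Complex.I*q) =O[𝓝 0] (fun q => q) :=
      (isBigO_refl (fun q : ℂ => q) _).const_mul_left _
    have := hq1.mul D6
    exact this.congr_right fun q => by ring
  have t2 : (fun q : ℂ => (Complex.I/(168*π) - 95*Complex.I*q/(28*π)) * (Hq q - (1792*π^8*q + 118272*π^8*q^2)))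
      =O[𝓝 0] (fun q => q^3) := by
    have hb : Tendsto (fun q : ℂ => Complex.I/(168*π) - 95*Complex.I*q/(28*π)) (𝓝 0)
        (𝓝 (Complex.I/(168*π))) := by
      have : Continuous (fun q : ℂ => Complex.I/(168*π) - 95*Complex.I*q/(28*π)) := by continuity
      simpa using this.tendsto 0
    have := (hb.isBigO_one ℂ).mul DH
    exact this.congr_right fun q => by ring
  have t3 : (fun q : ℂ => 401280*π^7*Complex.I*q^3) =O[𝓝 0] (fun q => q^3) :=
    (isBigO_refl _ _).const_mul_left _
  exact (t1.sub t2).add t3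

lemma H_lower : ∀ᶠ q : ℂ in 𝓝 0, 896*Real.pi^8*‖q‖ ≤ ‖Hq q‖ := by
  have hsub : (fun q : ℂ => Hq q - 1792*π^8*q) =O[𝓝 0] (fun q => q^2) := by
    have h1 := DH.trans q3_bigO_q2
    have h2 : (fun q : ℂ => 118272*π^8*q^2) =O[𝓝 0] (fun q => q^2) :=
      (isBigO_refl _ _).const_mul_left _
    exact (h1.add h2).congr_left fun q => by ring
  have hlo : (fun q : ℂ => q^2) =o[𝓝 0] (fun q => q) := by
    rw [isLittleO_iff]
    intro c hc
    have : ∀ᶠ q : ℂ in 𝓝 0, ‖q‖ ≤ c := by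
      have := Metric.closedBall_mem_nhds (0:ℂ) hc
      filter_upwards [this] with q hq
      simpa [mem_closedBall_zero_iff] using hq
    filter_upwards [this] with q hq
    rw [norm_pow]
    calc ‖q‖^2 = ‖q‖*‖q‖ := sq ‖q‖
    _ ≤ c * ‖q‖ := by gcongr
  have := hsub.trans_isLittleO hlo
  rw [isLittleO_iff] at this
  have hpos : (0:ℝ) < 896*Real.pi^8 := by positivity
  filter_upwards [this hpos] with q hq
  have hq1 : ‖(1792:ℂ)*π^8*q‖ = 1792*Real.pi^8*‖q‖ := by
    rw [norm_mul, norm_mul]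
    simp [abs_of_pos Real.pi_pos]
  have htri : ‖(1792:ℂ)*π^8*q‖ - ‖Hq q‖ ≤ ‖Hq q - 1792*π^8*q‖ := by
    calc ‖(1792:ℂ)*π^8*q‖ - ‖Hq q‖ ≤ ‖1792*π^8*q - Hq q‖ := norm_sub_norm_le _ _
    _ = ‖Hq q - 1792*π^8*q‖ := by rw [norm_sub_rev]
  rw [hq1] at htri
  linarith

lemma Gq_bigO : (fun q : ℂ => 36*π*Complex.I*G3q q/Hq q -
      ((Complex.I/(168*π))*q⁻¹ - 95*Complex.I/(28*π))) =O[𝓝[≠] (0:ℂ)] (fun q => q) := by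
  obtain ⟨C, hC⟩ := isBigO_iff.mp N_bigO
  rw [isBigO_iff]
  refine ⟨|C| / (896*Real.pi^8), ?_⟩
  have hne : ∀ᶠ q : ℂ in 𝓝[≠] (0:ℂ), q ≠ 0 := eventually_mem_nhdsWithin
  have hC' : ∀ᶠ q : ℂ in 𝓝[≠] (0:ℂ), ‖Nf q‖ ≤ C * ‖q^3‖ :=
    eventually_nhdsWithin_of_eventually_nhds hC
  have hH' : ∀ᶠ q : ℂ in 𝓝[≠] (0:ℂ), 896*Real.pi^8*‖q‖ ≤ ‖Hq q‖ :=
    eventually_nhdsWithin_of_eventually_nhds H_lower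
  filter_upwards [hne, hC', hH'] with q hq hN hH
  have hq0 : (0:ℝ) < ‖q‖ := norm_pos_iff.mpr hq
  have hπ8 : (0:ℝ) < 896*Real.pi^8 := by positivity
  have hHne : Hq q ≠ 0 := by
    intro h0
    rw [h0, norm_zero] at hH
    nlinarith
  have gen : ∀ a b c : ℂ, a/Hq q - (b*q⁻¹ - c) = (a*q - (b - c*q) * Hq q)/(q*Hq q) := by
    intro a b c
    rw [sub_div, mul_comm q (Hq q), mul_div_mul_right _ _ hq, mul_comm (Hq q) q,
      mul_div_mul_right _ _ hHne, sub_div, mul_div_assoc, div_self hq, mul_one,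
      ← div_eq_mul_inv]
  have hiden : 36*π*Complex.I*G3q q/Hq q - ((Complex.I/(168*π))*q⁻¹ - 95*Complex.I/(28*π))
      = Nf q / (q * Hq q) := by
    rw [show Nf q = (36*π*Complex.I*G3q q)*q
        - (Complex.I/(168*π) - (95*Complex.I/(28*π))*q)*Hq q from by simp only [Nf]; ring]
    exact gen _ _ _
  rw [hiden, norm_div, norm_mul]
  have hden : 896*Real.pi^8*‖q‖^2 ≤ ‖q‖ * ‖Hq q‖ := by
    have := mul_le_mul_of_nonneg_left hH (le_of_lt hq0)
    calc 896*Real.pi^8*‖q‖^2 = ‖q‖ * (896*Real.pi^8*‖q‖) := by ring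
    _ ≤ ‖q‖ * ‖Hq q‖ := this
  have hNum : ‖Nf q‖ ≤ |C| * ‖q‖^3 := by
    rw [norm_pow] at hN
    calc ‖Nf q‖ ≤ C * ‖q‖^3 := hN
    _ ≤ |C| * ‖q‖^3 := by gcongr; exact le_abs_self C
  calc ‖Nf q‖ / (‖q‖ * ‖Hq q‖) ≤ (|C| * ‖q‖^3) / (896*Real.pi^8*‖q‖^2) := by
        apply div_le_div₀ (by positivity) hNum (by positivity) hden
  _ = |C| / (896*Real.pi^8) * ‖q‖ := div_aux _ _ _ (by positivity) hq0.ne'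

lemma qq_tendsto (A : ℝ) :
    Tendsto qq (Filter.comap Complex.im Filter.atTop ⊓ Filter.principal {τ : ℂ | |τ.re| ≤ A})
      (𝓝[≠] (0:ℂ)) := by
  rw [tendsto_nhdsWithin_iff]
  constructor
  · rw [tendsto_zero_iff_norm_tendsto_zero]
    have him : Tendsto Complex.im
        (Filter.comap Complex.im Filter.atTop ⊓ Filter.principal {τ : ℂ | |τ.re| ≤ A}) atTop :=
      tendsto_comap.mono_left inf_le_left
    have h2 : Tendsto (fun y : ℝ => 2 * Real.pi * y) atTop atTop :=
      Tendsto.const_mul_atTop (by positivity) tendsto_id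
    have h3 : Tendsto (fun y : ℝ => Real.exp (-(2 * Real.pi * y))) atTop (𝓝 0) :=
      Real.tendsto_exp_neg_atTop_nhds_zero.comp h2
    have h4 := h3.comp him
    refine h4.congr fun τ => ?_
    show Real.exp (-(2 * Real.pi * τ.im)) = ‖qq τ‖
    rw [qq, Complex.norm_exp]
    congr 1
    simp [Complex.mul_re, Complex.mul_im]
  · exact Filter.Eventually.of_forall fun τ => Complex.exp_ne_zero _

end AuxPhi

theorem phi_asymptotics (A : ℝ) :
    (fun τ : ℂ =>
        (τ + 36 * (Real.pi : ℂ) * Complex.I * g3 τ / (g2 τ ^ 2 - 18 * eta1 τ * g3 τ)) -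
          (τ + (Complex.I / (168 * (Real.pi : ℂ))) * (qq τ)⁻¹ - 95 * Complex.I / (28 * (Real.pi : ℂ))))
      =O[Filter.comap Complex.im Filter.atTop ⊓ Filter.principal {τ : ℂ | |τ.re| ≤ A}]
      (fun τ => qq τ) := by
  have hcomp := (Gq_bigO).comp_tendsto (qq_tendsto A)
  refine hcomp.congr_left fun τ => ?_
  have h3 : G3q (qq τ) = g3 τ := rfl
  have hH : Hq (qq τ) = g2 τ^2 - 18*eta1 τ*g3 τ := rfl
  show 36*(Real.pi:ℂ)*Complex.I*G3q (qq τ)/Hq (qq τ)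
      - ((Complex.I/(168*(Real.pi:ℂ)))*(qq τ)⁻¹ - 95*Complex.I/(28*(Real.pi:ℂ))) = _
  rw [h3, hH]
  ring
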